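/- Let A and B be index types, a : (A →₀ ℕ) → ℝ and b : (B →₀ ℕ) → ℝ positive functions, and p, q ∈ ℕ. Let ψ : (A →₀ ℕ) × (B →₀ ℕ) → ℂ with T := ∑_{(α,β)} |ψ(α,β)|² a_α^{p} b_β^{q} < ∞ and let f : (B →₀ ℕ) → ℂ with F := ∑_{β} |f_β|² b_β^{−q} < ∞. Then for each α the family (conj(f_β)·ψ(α,β))_β is summable, and ∑_{α} |∑_{β} conj(f_β)·ψ(α,β)|² a_α^{p} ≤ F · T. -/

import Mathlib

open scoped ENNReal ComplexConjugate

/-- Cauchy–Schwarz for tsums of square roots. -/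
lemma tsum_sqrt_mul_sqrt_le {ι : Type*} {g h : ι → ℝ}
    (hg0 : ∀ i, 0 ≤ g i) (hh0 : ∀ i, 0 ≤ h i)
    (hg : Summable g) (hh : Summable h) :
    ∑' i, Real.sqrt (g i) * Real.sqrt (h i)
      ≤ Real.sqrt (∑' i, g i) * Real.sqrt (∑' i, h i) := by
  have hs : Summable fun i => Real.sqrt (g i) * Real.sqrt (h i) := by
    refine Summable.of_nonneg_of_le (fun i => by positivity) (fun i => ?_)
      ((hg.add hh).div_const 2)
    have h1 := Real.sq_sqrt (hg0 i)
    have h2 := Real.sq_sqrt (hh0 i)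
    nlinarith [sq_nonneg (Real.sqrt (g i) - Real.sqrt (h i))]
  refine hs.tsum_le_of_sum_le fun s => ?_
  calc ∑ i ∈ s, Real.sqrt (g i) * Real.sqrt (h i)
      ≤ Real.sqrt (∑ i ∈ s, g i) * Real.sqrt (∑ i ∈ s, h i) :=
        Real.sum_sqrt_mul_sqrt_le s hg0 hh0
    _ ≤ Real.sqrt (∑' i, g i) * Real.sqrt (∑' i, h i) := by
        gcongr
        · exact hg.sum_le_tsum s (fun i _ => hg0 i)
        · exact hh.sum_le_tsum s (fun i _ => hh0 i)

/-- summability from finite `ENNReal.ofReal` tsum -/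
lemma summable_of_ofReal_tsum_ne_top {ι : Type*} {g : ι → ℝ} (hg0 : ∀ i, 0 ≤ g i)
    (h : (∑' i, ENNReal.ofReal (g i)) ≠ ⊤) : Summable g := by
  have := ENNReal.summable_toReal h
  simpa [ENNReal.toReal_ofReal, hg0] using this

theorem tensor_pairing_estimate
    {A B : Type*} (a : (A →₀ ℕ) → ℝ) (b : (B →₀ ℕ) → ℝ)
    (hapos : ∀ α, 0 < a α) (hbpos : ∀ β, 0 < b β)
    (p q : ℕ)
    (ψ : (A →₀ ℕ) × (B →₀ ℕ) → ℂ)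
    (T : ℝ≥0∞)
    (hT : T = ∑' x : (A →₀ ℕ) × (B →₀ ℕ),
        ENNReal.ofReal (‖ψ x‖ ^ 2 * (a x.1) ^ p * (b x.2) ^ q))
    (hTfin : T < ⊤)
    (f : (B →₀ ℕ) → ℂ)
    (F : ℝ≥0∞)
    (hF : F = ∑' β : B →₀ ℕ, ENNReal.ofReal (‖f β‖ ^ 2 / (b β) ^ q))
    (hFfin : F < ⊤) :
    (∀ α : A →₀ ℕ, Summable fun β : B →₀ ℕ => conj (f β) * ψ (α, β)) ∧
    (∑' α : A →₀ ℕ,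
        ENNReal.ofReal (‖∑' β : B →₀ ℕ, conj (f β) * ψ (α, β)‖ ^ 2 * (a α) ^ p))
      ≤ F * T := by
  set g : (B →₀ ℕ) → ℝ := fun β => ‖f β‖ ^ 2 / (b β) ^ q with hg
  set w : (A →₀ ℕ) × (B →₀ ℕ) → ℝ :=
    fun x => ‖ψ x‖ ^ 2 * (a x.1) ^ p * (b x.2) ^ q with hw
  set h : (A →₀ ℕ) → (B →₀ ℕ) → ℝ := fun α β => ‖ψ (α, β)‖ ^ 2 * (b β) ^ q with hh
  have hg0 : ∀ β, 0 ≤ g β := fun β => by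
    have := (hbpos β).le; positivity
  have hw0 : ∀ x, 0 ≤ w x := fun x => by
    have := (hapos x.1).le; have := (hbpos x.2).le; positivity
  have hh0 : ∀ α β, 0 ≤ h α β := fun α β => by
    have := (hbpos β).le; positivity
  have hgsum : Summable g :=
    summable_of_ofReal_tsum_ne_top hg0 (hF ▸ hFfin.ne)
  have hwsum : Summable w :=
    summable_of_ofReal_tsum_ne_top hw0 (hT ▸ hTfin.ne)
  have hapne : ∀ α : A →₀ ℕ, (a α) ^ p ≠ 0 := fun α => (pow_pos (hapos α) p).ne'
  have hhsum : ∀ α, Summable (h α) := by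
    intro α
    have := (hwsum.prod_factor α).mul_right ((a α ^ p)⁻¹)
    refine this.congr fun β => ?_
    show (‖ψ (α, β)‖ ^ 2 * a α ^ p * b β ^ q) * (a α ^ p)⁻¹ = ‖ψ (α, β)‖ ^ 2 * b β ^ q
    rw [mul_right_comm, mul_assoc (‖ψ (α, β)‖ ^ 2), mul_inv_cancel₀ (hapne α), mul_one]
  have hnorm : ∀ α β, ‖conj (f β) * ψ (α, β)‖ = Real.sqrt (g β) * Real.sqrt (h α β) := by
    intro α β
    have hb : (b β) ^ q ≠ 0 := (pow_pos (hbpos β) q).ne'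
    have key : g β * h α β = (‖f β‖ * ‖ψ (α, β)‖) ^ 2 := by
      simp only [g, h]; field_simp
    rw [← Real.sqrt_mul (hg0 β), key, Real.sqrt_sq (by positivity),
      norm_mul, RCLike.norm_conj]
  have hsn : ∀ α, Summable fun β => ‖conj (f β) * ψ (α, β)‖ := by
    intro α
    refine Summable.of_nonneg_of_le (fun β => norm_nonneg _) (fun β => ?_)
      ((hgsum.add (hhsum α)).div_const 2)
    rw [hnorm α β]
    have h1 := Real.sq_sqrt (hg0 β)
    have h2 := Real.sq_sqrt (hh0 α β)
    nlinarith [sq_nonneg (Real.sqrt (g β) - Real.sqrt (h α β))]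
  have hsum : ∀ α : A →₀ ℕ, Summable fun β : B →₀ ℕ => conj (f β) * ψ (α, β) :=
    fun α => (hsn α).of_norm
  refine ⟨hsum, ?_⟩
  set G := ∑' β, g β with hG
  have hG0 : 0 ≤ G := tsum_nonneg hg0
  -- per-α bound
  have hkey : ∀ α : A →₀ ℕ,
      ‖∑' β : B →₀ ℕ, conj (f β) * ψ (α, β)‖ ^ 2 * (a α) ^ p
        ≤ G * ∑' β, w (α, β) := by
    intro α
    have hH0 : 0 ≤ ∑' β, h α β := tsum_nonneg (hh0 α)
    have h1 : ‖∑' β : B →₀ ℕ, conj (f β) * ψ (α, β)‖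
        ≤ Real.sqrt G * Real.sqrt (∑' β, h α β) := by
      refine le_trans (norm_tsum_le_tsum_norm (hsn α)) ?_
      calc ∑' β, ‖conj (f β) * ψ (α, β)‖
          = ∑' β, Real.sqrt (g β) * Real.sqrt (h α β) := by
            exact tsum_congr fun β => hnorm α β
        _ ≤ Real.sqrt G * Real.sqrt (∑' β, h α β) :=
            tsum_sqrt_mul_sqrt_le hg0 (hh0 α) hgsum (hhsum α)
    have h2 : ‖∑' β : B →₀ ℕ, conj (f β) * ψ (α, β)‖ ^ 2
        ≤ G * ∑' β, h α β := by
      have := mul_self_le_mul_self (norm_nonneg _) h1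
      calc ‖∑' β : B →₀ ℕ, conj (f β) * ψ (α, β)‖ ^ 2
          = ‖∑' β : B →₀ ℕ, conj (f β) * ψ (α, β)‖ *
            ‖∑' β : B →₀ ℕ, conj (f β) * ψ (α, β)‖ := sq _
        _ ≤ (Real.sqrt G * Real.sqrt (∑' β, h α β)) *
            (Real.sqrt G * Real.sqrt (∑' β, h α β)) := this
        _ = G * ∑' β, h α β := by
            rw [mul_mul_mul_comm, Real.mul_self_sqrt hG0, Real.mul_self_sqrt hH0]
    have h3 : (∑' β, h α β) * (a α) ^ p = ∑' β, w (α, β) := by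
      rw [← tsum_mul_right]
      exact tsum_congr fun β => by simp only [hw, hh]; ring
    calc ‖∑' β : B →₀ ℕ, conj (f β) * ψ (α, β)‖ ^ 2 * (a α) ^ p
        ≤ (G * ∑' β, h α β) * (a α) ^ p := by
          have := (pow_pos (hapos α) p).le
          gcongr
      _ = G * ∑' β, w (α, β) := by rw [mul_assoc, h3]
  -- assemble in ℝ≥0∞
  have hFG : F = ENNReal.ofReal G := by
    rw [hF, hG, ENNReal.ofReal_tsum_of_nonneg hg0 hgsum]
  have hTsplit : T = ∑' α : A →₀ ℕ, ENNReal.ofReal (∑' β, w (α, β)) := by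
    rw [hT]
    have e1 : ∀ α : A →₀ ℕ, ENNReal.ofReal (∑' β, w (α, β))
        = ∑' β, ENNReal.ofReal (w (α, β)) := fun α =>
      ENNReal.ofReal_tsum_of_nonneg (fun β => hw0 (α, β)) (hwsum.prod_factor α)
    simp_rw [e1]
    rw [← ENNReal.tsum_prod]
  calc ∑' α : A →₀ ℕ,
        ENNReal.ofReal (‖∑' β : B →₀ ℕ, conj (f β) * ψ (α, β)‖ ^ 2 * (a α) ^ p)
      ≤ ∑' α : A →₀ ℕ, ENNReal.ofReal (G * ∑' β, w (α, β)) :=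
        ENNReal.tsum_le_tsum fun α => ENNReal.ofReal_le_ofReal (hkey α)
    _ = ∑' α : A →₀ ℕ, ENNReal.ofReal G * ENNReal.ofReal (∑' β, w (α, β)) :=
        tsum_congr fun α => ENNReal.ofReal_mul hG0
    _ = ENNReal.ofReal G * ∑' α : A →₀ ℕ, ENNReal.ofReal (∑' β, w (α, β)) :=
        ENNReal.tsum_mul_left
    _ = F * T := by rw [← hFG, ← hTsplit]
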